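/- In the SMC instance with men m1,m2,m3 and women w1,w2,w3 where U(m1,w1)=0,V(m1,w1)=3; U(m1,w2)=1,V(m1,w2)=0; U(m1,w3)=2,V(m1,w3)=1; U(m2,w1)=2,V(m2,w1)=0; U(m2,w2)=1,V(m2,w2)=1; U(m2,w3)=0,V(m2,w3)=2; U(m3,w1)=1,V(m3,w1)=1; U(m3,w2)=0,V(m3,w2)=2; U(m3,w3)=3,V(m3,w3)=0, there exists a stable fractional matching with social welfare 15/2, which is strictly greater than the social welfare of every stable integral (perfect) matching on this instance. -/

import Mathlib

open Finset

/-- A fractional matching: nonnegative weights with row and column sums at most 1. -/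
def IsFrac {n : ℕ} (μ : Fin n → Fin n → ℝ) : Prop :=
  (∀ m w, 0 ≤ μ m w) ∧ (∀ m, ∑ w, μ m w ≤ 1) ∧ (∀ w, ∑ m, μ m w ≤ 1)

/-- An integral matching takes values in {0,1}. -/
def IsIntegralM {n : ℕ} (μ : Fin n → Fin n → ℝ) : Prop :=
  ∀ m w, μ m w = 0 ∨ μ m w = 1

/-- A complete (perfect) matching: all row and column sums equal 1. -/
def IsPerfect {n : ℕ} (μ : Fin n → Fin n → ℝ) : Prop :=
  (∀ m, ∑ w, μ m w = 1) ∧ (∀ w, ∑ m, μ m w = 1)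

/-- Utility of man `m` under matching `μ`. -/
def uM {n : ℕ} (U μ : Fin n → Fin n → ℝ) (m : Fin n) : ℝ := ∑ w, U m w * μ m w

/-- Utility of woman `w` under matching `μ`. -/
def vW {n : ℕ} (V μ : Fin n → Fin n → ℝ) (w : Fin n) : ℝ := ∑ m, V m w * μ m w

/-- Stability: no blocking pair. -/
def IsStable {n : ℕ} (U V μ : Fin n → Fin n → ℝ) : Prop :=
  ∀ m w, U m w ≤ uM U μ m ∨ V m w ≤ vW V μ w

/-- Social welfare. -/
def welfare {n : ℕ} (U V μ : Fin n → Fin n → ℝ) : ℝ :=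
  (∑ m, uM U μ m) + (∑ w, vW V μ w)

def U0 : Fin 3 → Fin 3 → ℝ := ![![0,1,2],![2,1,0],![1,0,3]]
def V0 : Fin 3 → Fin 3 → ℝ := ![![3,0,1],![0,1,2],![1,2,0]]

noncomputable def M0 : Fin 3 → Fin 3 → ℝ := ![![1,0,0],![0,1/2,1/2],![0,1/2,1/2]]

theorem stmt0 :
    ∃ μ : Fin 3 → Fin 3 → ℝ, IsFrac μ ∧ IsStable U0 V0 μ ∧ welfare U0 V0 μ = 15/2 ∧
      ∀ ν : Fin 3 → Fin 3 → ℝ, IsIntegralM ν → IsPerfect ν → IsStable U0 V0 ν →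
        welfare U0 V0 ν < 15/2 := by
  refine ⟨M0, ⟨?_, ?_, ?_⟩, ?_, ?_, ?_⟩
  · intro m w; fin_cases m <;> fin_cases w <;> norm_num [M0, Matrix.vecHead, Matrix.vecTail]
  · intro m; fin_cases m <;> norm_num [M0, Fin.sum_univ_three, Matrix.vecHead, Matrix.vecTail, Matrix.cons_val_two]
  · intro w; fin_cases w <;> norm_num [M0, Fin.sum_univ_three, Matrix.vecHead, Matrix.vecTail, Matrix.cons_val_two]
  · intro m w
    fin_cases m <;> fin_cases w <;>
      norm_num [uM, vW, U0, V0, M0, Fin.sum_univ_three, Matrix.vecHead, Matrix.vecTail, Matrix.cons_val_two]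
  · norm_num [welfare, uM, vW, U0, V0, M0, Fin.sum_univ_three, Matrix.vecHead, Matrix.vecTail, Matrix.cons_val_two]
  · intro ν hInt hP hS
    obtain ⟨hrow, hcol⟩ := hP
    have hnn : ∀ m w, (0:ℝ) ≤ ν m w := by
      intro m w; rcases hInt m w with h | h <;> rw [h] <;> norm_num
    have r0 : ν 0 0 + ν 0 1 + ν 0 2 = 1 := by
      have := hrow 0; rwa [Fin.sum_univ_three] at this
    have r1 : ν 1 0 + ν 1 1 + ν 1 2 = 1 := by
      have := hrow 1; rwa [Fin.sum_univ_three] at this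
    have r2 : ν 2 0 + ν 2 1 + ν 2 2 = 1 := by
      have := hrow 2; rwa [Fin.sum_univ_three] at this
    have c0 : ν 0 0 + ν 1 0 + ν 2 0 = 1 := by
      have := hcol 0; rwa [Fin.sum_univ_three] at this
    have c2 : ν 0 2 + ν 1 2 + ν 2 2 = 1 := by
      have := hcol 2; rwa [Fin.sum_univ_three] at this
    have hw : welfare U0 V0 ν =
        3*ν 0 0 + ν 0 1 + 3*ν 0 2 + 2*ν 1 0 + 2*ν 1 1 + 2*ν 1 2
        + 2*ν 2 0 + 2*ν 2 1 + 3*ν 2 2 := by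
      simp [welfare, uM, vW, U0, V0, Fin.sum_univ_three]; ring
    rw [hw]
    rcases hInt 0 1 with hb | hb
    · rcases hInt 2 2 with hi | hi
      · nlinarith [hnn 0 0, hnn 0 2, hnn 1 0, hnn 1 1, hnn 1 2, hnn 2 0, hnn 2 1]
      · -- identity matching: blocked by (0,2)
        exfalso
        have hs := hS 0 2
        simp only [uM, vW, U0, V0, Fin.sum_univ_three, Matrix.cons_val] at hs
        norm_num at hs
        rcases hs with h | h <;>
          nlinarith [hnn 0 0, hnn 0 2, hnn 1 0, hnn 1 1, hnn 1 2, hnn 2 0, hnn 2 1]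
    · nlinarith [hnn 0 0, hnn 0 2, hnn 1 0, hnn 1 1, hnn 1 2, hnn 2 0, hnn 2 1,
        hnn 2 2, hInt 2 2]
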